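/- For r ≥ 1 and n ≥ 1 with n divisible by r+1, the all-zero word 0^n is the unique central vertex of OΓ_n^{(1,r)}, and rad(OΓ_n^{(1,r)}) = nr/(r+1). -/

import Mathlib

/-- Hamming distance between two binary words (as lists). -/
def hdist (u v : List Bool) : ℕ := (List.zipWith bne u v).count true

/-- `w` is an I-Fibonacci (p,r)-code: no factor `1^(r+1)` and no factor `1 0^s 1` with `s < p`
(equivalently: maximal blocks of 1s have length ≤ r and blocks of 1s are separated by ≥ p zeros). -/
def ICode (p r : ℕ) (w : List Bool) : Prop :=
  ¬ (List.replicate (r + 1) true <:+: w) ∧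
  ∀ s < p, ¬ ((true :: (List.replicate s false ++ [true])) <:+: w)

/-- `w` is an O-Fibonacci (p,r)-code: no factor `(10^(p-1))^r 1` and no factor `1 0^s 1`
with `s ≤ p - 2`. -/
def OCode (p r : ℕ) (w : List Bool) : Prop :=
  ¬ (((List.replicate r (true :: List.replicate (p - 1) false)).flatten ++ [true]) <:+: w) ∧
  ∀ s, s + 2 ≤ p → ¬ ((true :: (List.replicate s false ++ [true])) <:+: w)

/-- Vertex type of the I-Fibonacci (p,r)-cube of dimension n. -/
def IVert (p r n : ℕ) := {w : List Bool // w.length = n ∧ ICode p r w}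

/-- Vertex type of the O-Fibonacci (p,r)-cube of dimension n. -/
def OVert (p r n : ℕ) := {w : List Bool // w.length = n ∧ OCode p r w}

/-- The I-Fibonacci (p,r)-cube: vertices adjacent iff they differ in exactly one coordinate. -/
def IGraph (p r n : ℕ) : SimpleGraph (IVert p r n) :=
  SimpleGraph.fromRel (fun u v => hdist u.1 v.1 = 1)

/-- The O-Fibonacci (p,r)-cube. -/
def OGraph (p r n : ℕ) : SimpleGraph (OVert p r n) :=
  SimpleGraph.fromRel (fun u v => hdist u.1 v.1 = 1)

/-- Eccentricity of a vertex. -/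
noncomputable def ecc {V : Type*} (G : SimpleGraph V) (v : V) : ℕ :=
  sSup {d | ∃ u, G.dist v u = d}

/-- Radius of a graph. -/
noncomputable def grad {V : Type*} (G : SimpleGraph V) : ℕ :=
  sInf {e | ∃ v, ecc G v = e}

/-- Diameter of a graph. -/
noncomputable def gdiam {V : Type*} (G : SimpleGraph V) : ℕ :=
  sSup {d | ∃ u v, G.dist u v = d}

/-- Degree of a vertex (number of neighbours). -/
noncomputable def deg {V : Type*} (G : SimpleGraph V) (v : V) : ℕ :=
  {u | G.Adj v u}.ncard

namespace OAux


/-- window validity: every block of `r+1` consecutive positions contains a `false`. -/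
def Valid (r : ℕ) (w : List Bool) : Prop :=
  ∀ i, i + (r+1) ≤ w.length → ∃ j, j ≤ r ∧ w.getD (i+j) false = false

lemma hdist_cons (a b : Bool) (u v : List Bool) :
    hdist (a::u) (b::v) = hdist u v + (if a = b then 0 else 1) := by
  simp only [hdist, List.zipWith_cons_cons, List.count_cons]
  congr 1
  by_cases h : a = b <;> simp [h]

lemma hdist_self (u : List Bool) : hdist u u = 0 := by
  induction u with
  | nil => rfl
  | cons a u ih => rw [hdist_cons, ih]; simp

lemma hdist_comm (u : List Bool) : ∀ v, hdist u v = hdist v u := by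
  induction u with
  | nil => intro v; cases v <;> rfl
  | cons a u ih =>
    intro v
    cases v with
    | nil => rfl
    | cons b v =>
      rw [hdist_cons, hdist_cons, ih v]
      by_cases h : a = b
      · simp [h]
      · rw [if_neg h, if_neg (fun e => h e.symm)]

lemma hdist_triangle (u : List Bool) : ∀ (v w : List Bool), u.length = v.length →
    v.length = w.length → hdist u w ≤ hdist u v + hdist v w := by
  induction u with
  | nil =>
    intro v w h1 h2
    rw [List.length_eq_zero_iff.1 h1.symm] at h2 ⊢
    rw [List.length_eq_zero_iff.1 h2.symm]
    simp [hdist_self]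
  | cons a u ih =>
    intro v w h1 h2
    cases v with
    | nil => simp at h1
    | cons b v =>
      cases w with
      | nil => simp at h2
      | cons c w =>
        simp only [List.length_cons, add_left_inj] at h1 h2
        rw [hdist_cons, hdist_cons, hdist_cons]
        have h3 := ih v w h1 h2
        have h4 : (if a = c then (0:ℕ) else 1) ≤ (if a = b then 0 else 1) + (if b = c then 0 else 1) := by
          by_cases hab : a = b <;> by_cases hbc : b = c <;>
            simp [hab, hbc] <;>
            first
              | omega
              | (by_cases hac : a = c <;> simp [hac])
              | (simp [hab.trans hbc])
        calc hdist u w + (if a = c then (0:ℕ) else 1)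
            ≤ (hdist u v + hdist v w) + ((if a = b then 0 else 1) + (if b = c then 0 else 1)) :=
              Nat.add_le_add h3 h4
          _ = hdist u v + (if a = b then 0 else 1) + (hdist v w + (if b = c then 0 else 1)) := by ring

lemma hdist_replicate_false (u : List Bool) : ∀ (n : ℕ), u.length = n →
    hdist (List.replicate n false) u = u.count true := by
  induction u with
  | nil => intro n h; subst h; rfl
  | cons a u ih =>
    intro n h
    cases n with
    | zero => simp at h
    | succ n =>
      rw [List.replicate_succ, hdist_cons, ih n (by simpa using h), List.count_cons]
      cases a <;> simp [hdist_comm]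

lemma hdist_eq_sum (u : List Bool) : ∀ (v : List Bool), u.length = v.length →
    hdist u v = ∑ i ∈ Finset.range u.length, (if u.getD i false = v.getD i false then 0 else 1) := by
  induction u with
  | nil => intro v h; simp [hdist]
  | cons a u ih =>
    intro v h
    cases v with
    | nil => simp at h
    | cons b v =>
      simp only [List.length_cons] at h
      rw [hdist_cons, List.length_cons, Finset.sum_range_succ']
      simp only [List.getD_cons_succ, List.getD_cons_zero]
      rw [ih v (by omega)]

lemma hdist_set_false (u : List Bool) : ∀ (i : ℕ) (hi : i < u.length), u[i] = true →
    hdist (u.set i false) u = 1 := by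
  induction u with
  | nil => intro i hi; simp at hi
  | cons a u ih =>
    intro i hi h
    cases i with
    | zero =>
      simp only [List.getElem_cons_zero] at h
      subst h
      rw [List.set_cons_zero, hdist_cons, hdist_self]
      simp
    | succ i =>
      rw [List.set_cons_succ, hdist_cons, ih i (by simpa using hi) (by simpa using h)]
      simp

lemma count_set_false (u : List Bool) : ∀ (i : ℕ) (hi : i < u.length), u[i] = true →
    (u.set i false).count true + 1 = u.count true := by
  induction u with
  | nil => intro i hi; simp at hi
  | cons a u ih =>
    intro i hi h
    cases i with
    | zero =>
      simp only [List.getElem_cons_zero] at h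
      subst h
      rw [List.set_cons_zero]
      simp [List.count_cons]
    | succ i =>
      rw [List.set_cons_succ]
      simp only [List.count_cons]
      have := ih i (by simpa using hi) (by simpa using h)
      omega




lemma getD_replicate_false (n x : ℕ) : (List.replicate n false).getD x false = false := by
  rcases Nat.lt_or_ge x n with h | h
  · rw [List.getD_eq_getElem _ _ (by simpa using h)]
    exact List.getElem_replicate _
  · exact List.getD_eq_default _ _ (by simpa using h)

lemma infix_replicate_true_iff (m : ℕ) (w : List Bool) :
    (List.replicate m true <:+: w) ↔
      ∃ i, i + m ≤ w.length ∧ ∀ j < m, w.getD (i+j) false = true := by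
  constructor
  · rintro ⟨s, t, rfl⟩
    refine ⟨s.length, by simp, ?_⟩
    intro j hj
    rw [List.getD_append _ _ _ _ (by simp; omega),
        List.getD_append_right _ _ _ _ (by simp),
        Nat.add_sub_cancel_left,
        List.getD_eq_getElem _ _ (by simpa using hj)]
    exact List.getElem_replicate _
  · rintro ⟨i, hle, hall⟩
    have h1 : (w.drop i).take m <:+: w :=
      ((List.take_prefix m _).isInfix).trans ((List.drop_suffix i w).isInfix)
    have h2 : (w.drop i).take m = List.replicate m true := by
      rw [List.eq_replicate_iff]
      constructor
      · rw [List.length_take, List.length_drop]; omega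
      · intro b hb
        obtain ⟨j, hj, hbj⟩ := List.mem_iff_getElem.1 hb
        have hjm : j < m := by
          rw [List.length_take, List.length_drop] at hj; omega
        have hjw : i + j < w.length := by omega
        rw [List.getElem_take, List.getElem_drop] at hbj
        rw [← hbj, ← List.getD_eq_getElem _ false hjw]
        exact hall j hjm
    rwa [h2] at h1

lemma flatten_replicate_singleton (r : ℕ) :
    (List.replicate r ([true] : List Bool)).flatten = List.replicate r true := by
  induction r with
  | zero => rfl
  | succ r ih => rw [List.replicate_succ, List.flatten_cons, ih, List.replicate_succ]; rfl

lemma ocode_one_iff (r : ℕ) (w : List Bool) : OCode 1 r w ↔ Valid r w := by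
  have hpat : ((List.replicate r (true :: List.replicate (1 - 1) false)).flatten ++ [true])
      = List.replicate (r+1) true := by
    norm_num
    rw [← List.replicate_succ']
  constructor
  · rintro ⟨h1, _⟩ i hi
    rw [hpat] at h1
    by_contra hno
    push_neg at hno
    apply h1
    rw [infix_replicate_true_iff]
    refine ⟨i, by omega, fun j hj => ?_⟩
    have := hno j (by omega)
    simpa using this
  · intro hv
    refine ⟨?_, fun s hs => absurd hs (by omega)⟩
    rw [hpat, infix_replicate_true_iff]
    rintro ⟨i, hle, hall⟩
    obtain ⟨j, hj, hfalse⟩ := hv i (by omega)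
    rw [hall j (by omega)] at hfalse
    simp at hfalse

lemma flatten_replicate_succ (k : ℕ) (l : List Bool) :
    (List.replicate (k+1) l).flatten = l ++ (List.replicate k l).flatten := by
  rw [List.replicate_succ, List.flatten_cons]

lemma length_flatten_replicate (l : List Bool) : ∀ k,
    ((List.replicate k l).flatten).length = k * l.length := by
  intro k
  induction k with
  | zero => simp
  | succ k ih => rw [flatten_replicate_succ, List.length_append, ih]; ring

lemma count_flatten_replicate (l : List Bool) : ∀ k,
    ((List.replicate k l).flatten).count true = k * l.count true := by
  intro k
  induction k with
  | zero => simp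
  | succ k ih => rw [flatten_replicate_succ, List.count_append, ih]; ring

lemma getD_flatten_replicate (l : List Bool) (m : ℕ) (hm : l.length = m) :
    ∀ k i, i < k * m → ((List.replicate k l).flatten).getD i false = l.getD (i % m) false := by
  intro k
  induction k with
  | zero =>
    intro i hi
    simp at hi
  | succ k ih =>
    intro i hi
    rw [flatten_replicate_succ]
    by_cases h : i < m
    · rw [List.getD_append _ _ _ _ (by omega), Nat.mod_eq_of_lt h]
    · have hmi : m ≤ i := by omega
      have hs : (k+1) * m = k*m + m := by ring
      rw [List.getD_append_right _ _ _ _ (by omega), hm, ih (i - m) (by omega)]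
      congr 1
      conv_rhs => rw [show i = i - m + m from by omega]
      rw [Nat.add_mod_right]

lemma count_le_aux (r : ℕ) : ∀ (k : ℕ) (u : List Bool), u.length = k * (r+1) →
    Valid r u → u.count true ≤ k * r := by
  intro k
  induction k with
  | zero =>
    intro u hlen _
    simp at hlen
    rw [hlen]
    simp
  | succ k ih =>
    intro u hlen hv
    have hs : (k+1) * (r+1) = k*(r+1) + (r+1) := by ring
    have hlen' : u.length = k*(r+1) + (r+1) := by omega
    have hlen_take : (u.take (r+1)).length = r+1 := by
      rw [List.length_take]; omega
    have htake : (u.take (r+1)).count true ≤ r := by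
      by_contra hc
      push_neg at hc
      have hcl : (u.take (r+1)).count true = (u.take (r+1)).length := by
        have := (List.count_le_length : (u.take (r+1)).count true ≤ _)
        omega
      have hall := List.count_eq_length.1 hcl
      obtain ⟨j, hj, hf⟩ := hv 0 (by omega)
      have hjlt : j < u.length := by omega
      have h1 : u.getD (0 + j) false = true := by
        rw [List.getD_eq_getElem _ _ (by omega)]
        have h2 := hall _ (List.getElem_mem (l := u.take (r+1)) (n := j)
          (by rw [hlen_take]; omega))
        rw [List.getElem_take] at h2
        simp only [Nat.zero_add]
        exact h2.symm
      rw [h1] at hf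
      simp at hf
    have hdrop_valid : Valid r (u.drop (r+1)) := by
      intro x hx
      rw [List.length_drop] at hx
      obtain ⟨j, hj, hf⟩ := hv ((r+1) + x) (by omega)
      refine ⟨j, hj, ?_⟩
      have hlt : x + j < (u.drop (r+1)).length := by rw [List.length_drop]; omega
      rw [List.getD_eq_getElem _ _ hlt, List.getElem_drop,
          ← List.getD_eq_getElem _ false (by rw [List.length_drop] at hlt; omega)]
      rw [Nat.add_assoc] at hf
      exact hf
    have hdl : (u.drop (r+1)).length = k * (r+1) := by rw [List.length_drop]; omega
    have hcd := ih (u.drop (r+1)) hdl hdrop_valid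
    have hsplit : u.count true = (u.take (r+1)).count true + (u.drop (r+1)).count true := by
      conv_lhs => rw [← List.take_append_drop (r+1) u]
      rw [List.count_append]
    have hs2 : (k+1) * r = k*r + r := by ring
    omega

lemma residue_sum (m : ℕ) (hm : 0 < m) (c : ℕ) (hc : c < m) :
    ∀ k, (∑ i ∈ Finset.range (k * m), if i % m = c then (1:ℕ) else 0) = k := by
  intro k
  induction k with
  | zero => simp
  | succ k ih =>
    have h1 : (k+1) * m = k*m + m := by ring
    rw [h1, Finset.range_eq_Ico,
        ← Finset.sum_Ico_consecutive _ (Nat.zero_le (k*m)) (Nat.le_add_right (k*m) m),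
        ← Finset.range_eq_Ico, ih, Finset.sum_Ico_eq_sum_range]
    have h2 : ∀ i ∈ Finset.range (k*m + m - k*m),
        (if (k*m + i) % m = c then (1:ℕ) else 0) = (if i = c then (1:ℕ) else 0) := by
      intro i hi
      rw [Finset.mem_range] at hi
      rw [Nat.mul_comm k m, Nat.mul_add_mod, Nat.mod_eq_of_lt (by omega)]
    rw [Finset.sum_congr rfl h2, show k*m + m - k*m = m from by omega,
        Finset.sum_ite_eq' (Finset.range m) c (fun _ => (1:ℕ)),
        if_pos (Finset.mem_range.2 hc)]


variable {r n : ℕ}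

lemma vlen (v : OVert 1 r n) : v.1.length = n := v.2.1

lemma vvalid (v : OVert 1 r n) : Valid r v.1 := (ocode_one_iff r v.1).1 v.2.2

def mkVert (w : List Bool) (h1 : w.length = n) (h2 : Valid r w) : OVert 1 r n :=
  ⟨w, h1, (ocode_one_iff r w).2 h2⟩

lemma zero_valid : Valid r (List.replicate n false) := by
  intro i _
  exact ⟨0, Nat.zero_le r, getD_replicate_false n (i+0)⟩

def zeroV (r n : ℕ) : OVert 1 r n := mkVert (List.replicate n false) (by simp) zero_valid

lemma zeroV_val : (zeroV r n).1 = List.replicate n false := rfl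

lemma adj_iff {u v : OVert 1 r n} :
    (OGraph 1 r n).Adj u v ↔ u ≠ v ∧ hdist u.1 v.1 = 1 := by
  show (SimpleGraph.fromRel _).Adj u v ↔ _
  rw [SimpleGraph.fromRel_adj]
  constructor
  · rintro ⟨hne, h | h⟩
    · exact ⟨hne, h⟩
    · exact ⟨hne, (hdist_comm u.1 v.1).trans h⟩
  · rintro ⟨hne, h⟩
    exact ⟨hne, Or.inl h⟩

lemma hdist_le_walk {u v : OVert 1 r n} (p : (OGraph 1 r n).Walk u v) :
    hdist u.1 v.1 ≤ p.length := by
  induction p with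
  | nil => simp [hdist_self]
  | @cons a b c h p ih =>
    have hab := (adj_iff.1 h).2
    have htri := hdist_triangle a.1 b.1 c.1 (by rw [vlen, vlen]) (by rw [vlen, vlen])
    rw [SimpleGraph.Walk.length_cons]
    omega

lemma set_false_valid (u : List Bool) (h : Valid r u) (i : ℕ) : Valid r (u.set i false) := by
  intro x hx
  rw [List.length_set] at hx
  obtain ⟨j, hj, hf⟩ := h x hx
  refine ⟨j, hj, ?_⟩
  by_cases hxi : x + j = i
  · subst hxi
    rw [List.getD_eq_getElem _ _ (by rw [List.length_set]; omega)]
    exact List.getElem_set_self _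
  · by_cases hlt : x + j < u.length
    · rw [List.getD_eq_getElem _ _ (by rw [List.length_set]; omega),
        List.getElem_set_ne (fun e => hxi e.symm)]
      rw [List.getD_eq_getElem _ false hlt] at hf
      exact hf
    · exact List.getD_eq_default _ _ (by rw [List.length_set]; omega)

lemma exists_walk_from_zero : ∀ (c : ℕ) (u : OVert 1 r n), u.1.count true ≤ c →
    ∃ p : (OGraph 1 r n).Walk (zeroV r n) u, p.length ≤ u.1.count true := by
  intro c
  induction c with
  | zero =>
    intro u hu
    have hz : u.1 = List.replicate n false := by
      have hm : true ∉ u.1 := List.count_eq_zero.1 (by omega)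
      refine List.eq_replicate_iff.2 ⟨vlen u, fun b hb => ?_⟩
      cases b
      · rfl
      · exact absurd hb hm
    have : u = zeroV r n := Subtype.ext hz
    subst this
    exact ⟨SimpleGraph.Walk.nil, by simp⟩
  | succ c ih =>
    intro u hu
    by_cases hle : u.1.count true ≤ c
    · exact ih u hle
    · have hmem : true ∈ u.1 := by
        by_contra hm
        rw [List.count_eq_zero.2 hm] at hle
        omega
      obtain ⟨i, hi, hval⟩ := List.mem_iff_getElem.1 hmem
      have hcnt := count_set_false u.1 i hi hval
      set u' : OVert 1 r n :=
        mkVert (u.1.set i false) (by rw [List.length_set, vlen]) (set_false_valid u.1 (vvalid u) i)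
        with hu'
      have hcnt' : u'.1.count true + 1 = u.1.count true := hcnt
      obtain ⟨p, hp⟩ := ih u' (by omega)
      have hadj : (OGraph 1 r n).Adj u' u := by
        rw [adj_iff]
        refine ⟨?_, hdist_set_false u.1 i hi hval⟩
        intro he
        have : u'.1 = u.1 := congrArg Subtype.val he
        rw [this] at hcnt'
        omega
      exact ⟨p.concat hadj, by rw [SimpleGraph.Walk.length_concat]; omega⟩

lemma reachable (u v : OVert 1 r n) : (OGraph 1 r n).Reachable u v := by
  obtain ⟨p, _⟩ := exists_walk_from_zero (u.1.count true) u le_rfl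
  obtain ⟨q, _⟩ := exists_walk_from_zero (v.1.count true) v le_rfl
  exact ⟨p.reverse.append q⟩

lemma hdist_le_dist (u v : OVert 1 r n) : hdist u.1 v.1 ≤ (OGraph 1 r n).dist u v := by
  obtain ⟨p, hp⟩ := (reachable u v).exists_walk_length_eq_dist
  rw [← hp]
  exact hdist_le_walk p

lemma dist_zero_le (u : OVert 1 r n) : (OGraph 1 r n).dist (zeroV r n) u ≤ u.1.count true := by
  obtain ⟨p, hp⟩ := exists_walk_from_zero (u.1.count true) u le_rfl
  exact le_trans (SimpleGraph.dist_le p) hp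

lemma dist_le_counts (u v : OVert 1 r n) :
    (OGraph 1 r n).dist u v ≤ u.1.count true + v.1.count true := by
  obtain ⟨p, hp⟩ := exists_walk_from_zero (u.1.count true) u le_rfl
  obtain ⟨q, hq⟩ := exists_walk_from_zero (v.1.count true) v le_rfl
  refine le_trans (SimpleGraph.dist_le (p.reverse.append q)) ?_
  rw [SimpleGraph.Walk.length_append, SimpleGraph.Walk.length_reverse]
  omega


end OAux

/-- for `(r+1) ∣ n`, `rad(OΓ_n^{(1,r)}) = nr/(r+1)` and `0^n` is the
unique central vertex. -/
theorem OGraph_radius_center_p_one (r n : ℕ) (hr : 1 ≤ r) (hn : 1 ≤ n)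
    (hdvd : (r + 1) ∣ n) :
    grad (OGraph 1 r n) = n * r / (r + 1) ∧
    ∀ v : OVert 1 r n,
      (ecc (OGraph 1 r n) v = grad (OGraph 1 r n) ↔ v.1 = List.replicate n false) := by
  classical
  obtain ⟨k, hk⟩ := hdvd
  have hk' : n = k * (r+1) := by rw [hk]; ring
  have hk1 : 1 ≤ k := by
    rcases Nat.eq_zero_or_pos k with h | h
    · subst h; simp at hk'; omega
    · exact h
  set M := k * r with hM
  have hnM : n = M + k := by rw [hk', hM]; ring
  have hcount : ∀ v : OVert 1 r n, v.1.count true ≤ M := fun v =>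
    OAux.count_le_aux r k v.1 (by rw [OAux.vlen, hk']) (OAux.vvalid v)
  -- the max-weight vertex v0
  set b0 : List Bool := List.replicate r true ++ [false] with hb0
  have hb0len : b0.length = r + 1 := by simp [hb0]
  set w0 : List Bool := (List.replicate k b0).flatten with hw0
  have hw0len : w0.length = n := by
    rw [hw0, OAux.length_flatten_replicate, hb0len, ← hk']
  have hw0cnt : w0.count true = M := by
    rw [hw0, OAux.count_flatten_replicate, hM]
    congr 1
    rw [hb0, List.count_append, List.count_replicate_self]
    simp
  have hw0valid : OAux.Valid r w0 := by
    intro i hi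
    rw [hw0len] at hi
    have him : i % (r+1) < r + 1 := Nat.mod_lt _ (by omega)
    refine ⟨r - i % (r+1), by omega, ?_⟩
    have hd := Nat.div_add_mod i (r+1)
    have hidx : (i + (r - i % (r+1))) % (r+1) = r := by
      rw [show i + (r - i % (r+1)) = (r+1) * (i / (r+1)) + r from by omega]
      rw [Nat.mul_add_mod, Nat.mod_eq_of_lt (by omega)]
    rw [hw0, OAux.getD_flatten_replicate b0 (r+1) hb0len k _ (by omega), hidx, hb0,
        List.getD_append_right _ _ _ _ (by simp),
        List.length_replicate, Nat.sub_self]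
    rfl
  set v0 : OVert 1 r n := OAux.mkVert w0 hw0len hw0valid with hv0
  have hv0val : v0.1 = w0 := rfl
  -- boundedness of distance sets
  have hBdd : ∀ v : OVert 1 r n, BddAbove {d | ∃ u, (OGraph 1 r n).dist v u = d} := by
    intro v
    refine ⟨M + M, ?_⟩
    rintro d ⟨u, rfl⟩
    exact le_trans (OAux.dist_le_counts v u) (Nat.add_le_add (hcount v) (hcount u))
  -- eccentricity of the zero vertex
  have hdist_zero_v0 : (OGraph 1 r n).dist (OAux.zeroV r n) v0 = M := by
    apply le_antisymm
    · exact le_trans (OAux.dist_zero_le v0) (le_of_eq hw0cnt)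
    · calc M = hdist (OAux.zeroV r n).1 v0.1 := by
            rw [OAux.zeroV_val, hv0val, OAux.hdist_replicate_false w0 n hw0len, hw0cnt]
        _ ≤ _ := OAux.hdist_le_dist _ _
  have hecc_zero : ecc (OGraph 1 r n) (OAux.zeroV r n) = M := by
    unfold ecc
    apply le_antisymm
    · refine csSup_le ⟨_, OAux.zeroV r n, rfl⟩ ?_
      rintro d ⟨u, rfl⟩
      exact le_trans (OAux.dist_zero_le u) (hcount u)
    · exact le_csSup (hBdd _) ⟨v0, hdist_zero_v0⟩
  -- eccentricity of any non-zero vertex is ≥ M + 1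
  have hecc_big : ∀ v : OVert 1 r n, v.1 ≠ List.replicate n false →
      M + 1 ≤ ecc (OGraph 1 r n) v := by
    intro v hv
    have hmem : true ∈ v.1 := by
      by_contra hm
      apply hv
      refine List.eq_replicate_iff.2 ⟨OAux.vlen v, fun b hb => ?_⟩
      cases b
      · rfl
      · exact absurd hb hm
    obtain ⟨t, ht, htv⟩ := List.mem_iff_getElem.1 hmem
    have htn : t < n := by rw [← OAux.vlen v]; exact ht
    set c := t % (r+1) with hc
    have hclt : c < r+1 := Nat.mod_lt _ (by omega)
    set w : List Bool :=
      List.ofFn (n := n) (fun i => if (i : ℕ) % (r+1) = c then false else !(v.1.getD i false))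
      with hwdef
    have hwlen : w.length = n := List.length_ofFn
    have hwget : ∀ i, i < n → w.getD i false =
        if i % (r+1) = c then false else !(v.1.getD i false) := by
      intro i hi
      rw [List.getD_eq_getElem _ _ (by rw [hwlen]; exact hi)]
      simp only [hwdef]
      rw [List.getElem_ofFn]
    have hwvalid : OAux.Valid r w := by
      intro i hi
      rw [hwlen] at hi
      obtain ⟨j, hjr, hjm⟩ : ∃ j, j ≤ r ∧ (i + j) % (r+1) = c := by
        have hd := Nat.div_add_mod i (r+1)
        have him : i % (r+1) < r+1 := Nat.mod_lt _ (by omega)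
        by_cases hca : i % (r+1) ≤ c
        · refine ⟨c - i % (r+1), by omega, ?_⟩
          rw [show i + (c - i % (r+1)) = (r+1) * (i / (r+1)) + c from by omega]
          rw [Nat.mul_add_mod, Nat.mod_eq_of_lt hclt]
        · refine ⟨c + (r+1) - i % (r+1), by omega, ?_⟩
          rw [show i + (c + (r+1) - i % (r+1)) = (r+1) * (i / (r+1) + 1) + c from by
            rw [Nat.mul_add]; omega]
          rw [Nat.mul_add_mod, Nat.mod_eq_of_lt hclt]
      refine ⟨j, hjr, ?_⟩
      rw [hwget _ (by omega), hjm]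
      simp
    set uC : OVert 1 r n := OAux.mkVert w hwlen hwvalid with huC
    have hdistlow : M + 1 ≤ hdist v.1 w := by
      rw [OAux.hdist_eq_sum v.1 w (by rw [OAux.vlen, hwlen]), OAux.vlen v]
      have hsplit : ∀ i : ℕ,
          (if v.1.getD i false = w.getD i false then (1:ℕ) else 0) +
          (if v.1.getD i false = w.getD i false then (0:ℕ) else 1) = 1 := by
        intro i
        by_cases h : v.1.getD i false = w.getD i false
        · rw [if_pos h, if_pos h]
        · rw [if_neg h, if_neg h]
      have hg : (∑ i ∈ Finset.range n, if i % (r+1) = c then (1:ℕ) else 0) = k := by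
        rw [hk']
        exact OAux.residue_sum (r+1) (by omega) c hclt k
      have hpt : ∀ i ∈ Finset.range n,
          (if v.1.getD i false = w.getD i false then (1:ℕ) else 0) ≤
          (if i % (r+1) = c then (1:ℕ) else 0) := by
        intro i hi
        rw [Finset.mem_range] at hi
        by_cases hres : i % (r+1) = c
        · rw [if_pos hres]
          split <;> omega
        · rw [hwget i hi, if_neg hres, if_neg hres]
          simp
      have htzero : (if v.1.getD t false = w.getD t false then (1:ℕ) else 0) = 0 := by
        rw [hwget t htn, if_pos hc.symm, List.getD_eq_getElem _ _ ht, htv]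
        simp
      have hA : (∑ i ∈ Finset.range n,
          if v.1.getD i false = w.getD i false then (1:ℕ) else 0) ≤ k - 1 := by
        have e1 : (∑ i ∈ Finset.range n,
            if v.1.getD i false = w.getD i false then (1:ℕ) else 0)
            = ∑ i ∈ (Finset.range n).erase t,
              if v.1.getD i false = w.getD i false then (1:ℕ) else 0 :=
          (Finset.sum_erase (Finset.range n)
            (f := fun i => if v.1.getD i false = w.getD i false then (1:ℕ) else 0)
            htzero).symm
        have e2 : (∑ i ∈ (Finset.range n).erase t,
              if v.1.getD i false = w.getD i false then (1:ℕ) else 0)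
            ≤ ∑ i ∈ (Finset.range n).erase t, if i % (r+1) = c then (1:ℕ) else 0 :=
          Finset.sum_le_sum (fun i hi => hpt i (Finset.mem_of_mem_erase hi))
        have e3 := Finset.add_sum_erase (Finset.range n)
          (fun i => if i % (r+1) = c then (1:ℕ) else 0) (Finset.mem_range.2 htn)
        beta_reduce at e3
        rw [if_pos hc.symm] at e3
        omega
      have hAD : (∑ i ∈ Finset.range n,
            if v.1.getD i false = w.getD i false then (1:ℕ) else 0) +
          (∑ i ∈ Finset.range n,
            if v.1.getD i false = w.getD i false then (0:ℕ) else 1) = n := by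
        rw [← Finset.sum_add_distrib, Finset.sum_congr rfl (fun i _ => hsplit i)]
        simp
      omega
    have hdlow : M + 1 ≤ (OGraph 1 r n).dist v uC :=
      le_trans hdistlow (OAux.hdist_le_dist v uC)
    calc M + 1 ≤ (OGraph 1 r n).dist v uC := hdlow
      _ ≤ ecc (OGraph 1 r n) v := le_csSup (hBdd v) ⟨uC, rfl⟩
  -- the radius
  have hgrad : grad (OGraph 1 r n) = M := by
    unfold grad
    apply le_antisymm
    · exact Nat.sInf_le ⟨OAux.zeroV r n, hecc_zero⟩
    · refine le_csInf ⟨M, OAux.zeroV r n, hecc_zero⟩ ?_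
      rintro e ⟨v, rfl⟩
      by_cases hv : v.1 = List.replicate n false
      · rw [show v = OAux.zeroV r n from Subtype.ext hv, hecc_zero]
      · exact le_trans (Nat.le_succ M) (hecc_big v hv)
  constructor
  · rw [hgrad, hk, show (r+1)*k*r = (r+1)*M from by rw [hM]; ring,
      Nat.mul_div_cancel_left _ (show 0 < r+1 by omega)]
  · intro v
    rw [hgrad]
    constructor
    · intro he
      by_contra hv
      have := hecc_big v hv
      omega
    · intro hv
      rw [show v = OAux.zeroV r n from Subtype.ext hv, hecc_zero]
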